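/- Let Λ ⊂ ℝⁿ be an arbitrary set and g ∈ ℝ[x₁,…,xₙ]. Define f₁ : ℝ^{n+1} → ℝ^{n+1} by f₁(x, x_{n+1}) = (x, x_{n+1}(1 + x_{n+1}²·g(x))). Then f₁(ℝ^{n+1} \ (Λ × {0})) = ℝ^{n+1} \ ((Λ ∩ {g ≥ 0}) × {0}). -/

import Mathlib

open MvPolynomial

lemma cubic_surj (c y : ℝ) : ∃ t : ℝ, t * (1 + t ^ 2 * c) = y := by
  have hcont : Continuous fun t : ℝ => t * (1 + t ^ 2 * c) := by continuity
  rcases le_or_gt 0 c with hc | hc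
  · set T := |y| with hT
    have hT0 : 0 ≤ T := abs_nonneg y
    have hy1 : y ≤ T := le_abs_self y
    have hy2 : -T ≤ y := neg_abs_le y
    have haux : 0 ≤ T ^ 2 * c * T := by positivity
    have h1 : y ≤ T * (1 + T ^ 2 * c) := by nlinarith
    have h2 : (-T) * (1 + (-T) ^ 2 * c) ≤ y := by nlinarith
    have := intermediate_value_Icc (by linarith : -T ≤ T) hcont.continuousOn
    obtain ⟨t, _, ht⟩ := this ⟨h2, h1⟩
    exact ⟨t, ht⟩
  · have hc' : 0 < -c := by linarith
    set s := 2 / (-c) with hs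
    have hs0 : 0 ≤ s := div_nonneg (by norm_num) (by linarith)
    set T := max |y| (Real.sqrt s) with hT
    have hT0 : 0 ≤ T := le_trans (abs_nonneg y) (le_max_left _ _)
    have hy1 : y ≤ T := le_trans (le_abs_self y) (le_max_left _ _)
    have hy2 : -T ≤ y := by
      have h1 := neg_abs_le y
      have h2 := le_max_left |y| (Real.sqrt s)
      linarith
    have hsq : s ≤ T ^ 2 := by
      have h1 : Real.sqrt s ≤ T := le_max_right _ _
      have h2 := Real.sq_sqrt hs0
      nlinarith [Real.sqrt_nonneg s]
    have hcT : T ^ 2 * c ≤ -2 := by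
      have : 2 ≤ T ^ 2 * (-c) := by
        rw [hs, div_le_iff₀ hc'] at hsq
        linarith
      linarith
    have h1 : T * (1 + T ^ 2 * c) ≤ y := by nlinarith
    have h2 : y ≤ (-T) * (1 + (-T) ^ 2 * c) := by nlinarith
    have := intermediate_value_Icc' (by linarith : -T ≤ T) hcont.continuousOn
    obtain ⟨t, _, ht⟩ := this ⟨h1, h2⟩
    exact ⟨t, ht⟩

/-- f₁(x, x_{n+1}) = (x, x_{n+1}(1 + x_{n+1}²g(x))) maps ℝ^{n+1} \ (Λ×{0}) onto
ℝ^{n+1} \ ((Λ ∩ {g ≥ 0})×{0}). -/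
theorem stmt_3 (n : ℕ) (Λ : Set (Fin n → ℝ)) (g : MvPolynomial (Fin n) ℝ) :
    (fun p : (Fin n → ℝ) × ℝ => (p.1, p.2 * (1 + p.2 ^ 2 * eval p.1 g))) ''
        ({p : (Fin n → ℝ) × ℝ | p.1 ∈ Λ ∧ p.2 = 0}ᶜ)
      = {p : (Fin n → ℝ) × ℝ | p.1 ∈ Λ ∧ 0 ≤ eval p.1 g ∧ p.2 = 0}ᶜ := by
  ext q
  simp only [Set.mem_image, Set.mem_compl_iff, Set.mem_setOf_eq]
  constructor
  · rintro ⟨p, hp, heq⟩ ⟨hΛ, hg, h0⟩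
    obtain ⟨h1, h2⟩ := Prod.mk.injEq _ _ _ _ ▸ heq
    rw [← h1] at hΛ hg
    rw [h0] at h2
    have hg' : 0 ≤ eval p.1 g := hg
    have hpos : 0 < 1 + p.2 ^ 2 * eval p.1 g := by nlinarith [sq_nonneg p.2]
    have : p.2 = 0 := by
      rcases mul_eq_zero.mp h2 with h | h
      · exact h
      · linarith
    exact hp ⟨hΛ, this⟩
  · intro hq
    set c := eval q.1 g with hc
    by_cases hΛ : q.1 ∈ Λ
    · by_cases h0 : q.2 = 0
      · have hgneg : c < 0 := by
          by_contra h
          exact hq ⟨hΛ, by push_neg at h; exact h, h0⟩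
        have hpos : (0:ℝ) < 1 / (-c) := one_div_pos.mpr (by linarith)
        refine ⟨(q.1, Real.sqrt (1 / (-c))), ?_, ?_⟩
        · rintro ⟨-, ht⟩
          have := Real.sqrt_pos.mpr hpos
          simp only at ht
          linarith
        · have hsq : Real.sqrt (1 / (-c)) ^ 2 = 1 / (-c) :=
            Real.sq_sqrt (le_of_lt hpos)
          have hcne : c ≠ 0 := ne_of_lt hgneg
          have hz : 1 + Real.sqrt (1 / (-c)) ^ 2 * c = 0 := by
            rw [hsq]
            field_simp
            norm_num
          show (q.1, Real.sqrt (1 / (-c)) * (1 + Real.sqrt (1 / (-c)) ^ 2 * eval q.1 g)) = q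
          rw [← hc, hz, mul_zero]
          exact Prod.ext rfl h0.symm
      · obtain ⟨t, ht⟩ := cubic_surj c q.2
        refine ⟨(q.1, t), ?_, ?_⟩
        · rintro ⟨-, ht0⟩
          apply h0
          have ht0' : t = 0 := ht0
          rw [← ht, ht0']; ring
        · exact Prod.ext rfl (by rw [← hc]; exact ht)
    · obtain ⟨t, ht⟩ := cubic_surj c q.2
      exact ⟨(q.1, t), fun h => hΛ h.1, Prod.ext rfl (by rw [← hc]; exact ht)⟩
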